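/- Let m ∈ ℕ₀. Then for all x ∈ ℝ: (1) ∫_ℝ e^{-|y|} · |y|^m · sin(x−y) dy = (m!/2^{(m−1)/2}) · cos((m+1)·π/4) · sin(x), and (2) ∫_ℝ e^{-|y|} · |y|^m · cos(x−y) dy = (m!/2^{(m−1)/2}) · cos((m+1)·π/4) · cos(x), where 2^{(m−1)/2} denotes the real power of 2 with exponent (m−1)/2. -/

import Mathlib

open MeasureTheory Set Filter Complex


lemma auxR (n : ℕ) : IntegrableOn (fun t : ℝ => t ^ n * Real.exp (-t)) (Ioi 0) := by
  have h := Real.GammaIntegral_convergent (s := (n + 1 : ℝ)) (by positivity)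
  refine h.congr_fun (fun t ht => ?_) measurableSet_Ioi
  rw [add_sub_cancel_right]; dsimp only; rw [Real.rpow_natCast, mul_comm]

lemma hc0 : (1 - Complex.I) ≠ 0 := by
  intro h
  have := congrArg Complex.re h
  simp at this

lemma contE (n : ℕ) : Continuous (fun t : ℝ => (t : ℂ) ^ n * Complex.exp (-((1 - Complex.I) * t))) :=
  (Complex.continuous_ofReal.pow n).mul
    (Complex.continuous_exp.comp ((continuous_const.mul Complex.continuous_ofReal).neg))

lemma normE (n : ℕ) (t : ℝ) (ht : 0 < t) :
    ‖(t : ℂ) ^ n * Complex.exp (-((1 - Complex.I) * t))‖ = t ^ n * Real.exp (-t) := by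
  rw [norm_mul, norm_pow, Complex.norm_real, Complex.norm_exp]
  have h2 : (-((1 - Complex.I) * (t : ℂ))).re = -t := by simp
  rw [h2, Real.norm_eq_abs, abs_of_pos ht]

lemma auxC (n : ℕ) :
    IntegrableOn (fun t : ℝ => (t : ℂ) ^ n * Complex.exp (-((1 - Complex.I) * t))) (Ioi 0) := by
  refine (auxR n).mono' (contE n).aestronglyMeasurable.restrict ?_
  filter_upwards [ae_restrict_mem measurableSet_Ioi] with t ht
  rw [normE n t ht]

lemma hdE (t : ℝ) : HasDerivAt (fun s : ℝ => Complex.exp (-((1 - Complex.I) * s)))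
    (-(1 - Complex.I) * Complex.exp (-((1 - Complex.I) * t))) t := by
  have h1 : HasDerivAt (fun s : ℝ => -((1 - Complex.I) * (s : ℂ))) (-(1 - Complex.I)) t := by
    simpa [Pi.neg_def] using (((hasDerivAt_id ((t : ℝ) : ℂ)).const_mul (1 - Complex.I)).comp_ofReal).neg
  simpa [mul_comm] using h1.cexp

lemma hdP (n : ℕ) (t : ℝ) : HasDerivAt (fun s : ℝ => ((s : ℝ) : ℂ) ^ n)
    (n * (t : ℂ) ^ (n - 1)) t :=
  (hasDerivAt_pow n ((t : ℝ) : ℂ)).comp_ofReal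

lemma tendE (n : ℕ) : Tendsto (fun t : ℝ => (t : ℂ) ^ n * Complex.exp (-((1 - Complex.I) * t)))
    atTop (nhds 0) := by
  apply squeeze_zero_norm' (a := fun t : ℝ => t ^ n * Real.exp (-t))
  · filter_upwards [eventually_gt_atTop (0 : ℝ)] with t ht
    exact le_of_eq (normE n t ht)
  · exact Real.tendsto_pow_mul_exp_neg_atTop_nhds_zero n

lemma key (n : ℕ) : ∫ t in Ioi (0 : ℝ), (t : ℂ) ^ n * Complex.exp (-((1 - Complex.I) * t))
    = (n.factorial : ℂ) / (1 - Complex.I) ^ (n + 1) := by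
  induction n with
  | zero =>
    have hder : ∀ t ∈ Ici (0:ℝ), HasDerivAt
        (fun s : ℝ => -(1 - Complex.I)⁻¹ * Complex.exp (-((1 - Complex.I) * s)))
        (Complex.exp (-((1 - Complex.I) * t))) t := by
      intro t _
      have h := (hdE t).const_mul (-(1 - Complex.I)⁻¹)
      have h2 : -(1 - Complex.I)⁻¹ * (-(1 - Complex.I) * Complex.exp (-((1 - Complex.I) * t)))
          = Complex.exp (-((1 - Complex.I) * t)) := by
        rw [← mul_assoc, neg_mul_neg, inv_mul_cancel₀ hc0, one_mul]
      rw [← h2]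
      exact h
    have hint : IntegrableOn (fun t : ℝ => Complex.exp (-((1 - Complex.I) * t))) (Ioi 0) := by
      simpa using auxC 0
    have htend : Tendsto (fun t : ℝ => -(1 - Complex.I)⁻¹ * Complex.exp (-((1 - Complex.I) * t)))
        atTop (nhds 0) := by
      simpa using (tendE 0).const_mul (-(1 - Complex.I)⁻¹)
    have := integral_Ioi_of_hasDerivAt_of_tendsto' hder hint htend
    simp only [pow_zero, one_mul]
    rw [this]
    simp [hc0]
  | succ n ih =>
    set c : ℂ := 1 - Complex.I with hc
    have hu : ∀ t ∈ Ioi (0:ℝ), HasDerivAt (fun s : ℝ => ((s:ℝ) : ℂ) ^ (n+1))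
        (((n:ℂ)+1) * (t : ℂ) ^ n) t := by
      intro t _
      simpa using hdP (n+1) t
    have hv : ∀ t ∈ Ioi (0:ℝ), HasDerivAt (fun s : ℝ => -c⁻¹ * Complex.exp (-(c * s)))
        (Complex.exp (-(c * t))) t := by
      intro t _
      have h := (hdE t).const_mul (-c⁻¹)
      have h2 : -c⁻¹ * (-c * Complex.exp (-(c * t))) = Complex.exp (-(c * t)) := by
        rw [← mul_assoc, neg_mul_neg, inv_mul_cancel₀ hc0, one_mul]
      rw [← h2]
      exact h
    have huv' : IntegrableOn ((fun s : ℝ => ((s:ℝ) : ℂ) ^ (n+1)) *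
        (fun s : ℝ => Complex.exp (-(c * s)))) (Ioi 0) := by
      simpa [Pi.mul_def] using auxC (n+1)
    have hu'v : IntegrableOn ((fun s : ℝ => ((n:ℂ)+1) * ((s:ℝ):ℂ) ^ n) *
        (fun s : ℝ => -c⁻¹ * Complex.exp (-(c * s)))) (Ioi 0) := by
      have h := (auxC n).const_mul (((n:ℂ)+1) * -c⁻¹)
      refine h.congr (Filter.Eventually.of_forall (fun t => ?_))
      simp only [Pi.mul_def]
      ring
    have h_zero : Tendsto ((fun s : ℝ => ((s:ℝ) : ℂ) ^ (n+1)) *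
        (fun s : ℝ => -c⁻¹ * Complex.exp (-(c * s)))) (nhdsWithin 0 (Ioi 0)) (nhds 0) := by
      have hcont : Continuous ((fun s : ℝ => ((s:ℝ) : ℂ) ^ (n+1)) *
          (fun s : ℝ => -c⁻¹ * Complex.exp (-(c * s)))) :=
        (Complex.continuous_ofReal.pow _).mul
          (continuous_const.mul (Complex.continuous_exp.comp
            ((continuous_const.mul Complex.continuous_ofReal).neg)))
      have h := (hcont.tendsto 0).mono_left (nhdsWithin_le_nhds (s := Ioi (0:ℝ)))
      simpa using h
    have h_infty : Tendsto ((fun s : ℝ => ((s:ℝ) : ℂ) ^ (n+1)) *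
        (fun s : ℝ => -c⁻¹ * Complex.exp (-(c * s)))) atTop (nhds 0) := by
      have := (tendE (n+1)).const_mul (-c⁻¹)
      simp only [mul_zero] at this
      refine this.congr (fun t => ?_)
      simp [Pi.mul_def]; ring
    have hibp := integral_Ioi_mul_deriv_eq_deriv_mul hu hv huv' hu'v h_zero h_infty
    rw [hibp]
    have : ∫ t in Ioi (0:ℝ), (((n:ℂ)+1) * (t:ℂ) ^ n) * (-c⁻¹ * Complex.exp (-(c * t)))
        = (((n:ℂ)+1) * -c⁻¹) * ∫ t in Ioi (0:ℝ), (t:ℂ) ^ n * Complex.exp (-(c * t)) := by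
      rw [← integral_const_mul]
      refine setIntegral_congr_fun measurableSet_Ioi (fun t _ => by ring)
    rw [this, ih]
    rw [Nat.factorial_succ]
    push_cast
    field_simp
    ring

lemma re_integrand (m : ℕ) (t : ℝ) :
    ((t : ℂ) ^ m * Complex.exp (-((1 - Complex.I) * t))).re
      = t ^ m * Real.exp (-t) * Real.cos t := by
  rw [← Complex.ofReal_pow, Complex.re_ofReal_mul, Complex.exp_re]
  have h1 : (-((1 - Complex.I) * (t : ℂ))).re = -t := by simp
  have h2 : (-((1 - Complex.I) * (t : ℂ))).im = t := by simp
  rw [h1, h2, mul_assoc]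

lemma cosIoi (m : ℕ) : ∫ t in Ioi (0 : ℝ), t ^ m * Real.exp (-t) * Real.cos t
    = ((m.factorial : ℂ) / (1 - Complex.I) ^ (m + 1)).re := by
  rw [← key m]
  have h := integral_re (auxC m)
  simp only [RCLike.re_to_complex] at h
  rw [← h]
  refine setIntegral_congr_fun measurableSet_Ioi (fun t _ => ?_)
  exact (re_integrand m t).symm

lemma exp_pi4 : Complex.exp ((Real.pi / 4 : ℝ) * Complex.I)
    = ((Real.sqrt 2 / 2 : ℝ) : ℂ) + ((Real.sqrt 2 / 2 : ℝ) : ℂ) * Complex.I := by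
  rw [Complex.exp_mul_I, ← Complex.ofReal_cos, ← Complex.ofReal_sin,
    Real.cos_pi_div_four, Real.sin_pi_div_four]

lemma hinv : (1 - Complex.I)⁻¹
    = ((Real.sqrt 2 / 2 : ℝ) : ℂ) * Complex.exp ((Real.pi / 4 : ℝ) * Complex.I) := by
  apply inv_eq_of_mul_eq_one_right
  rw [exp_pi4]
  have ha : (Real.sqrt 2 / 2) * (Real.sqrt 2 / 2) = 1 / 2 := by
    nlinarith [Real.sq_sqrt (by norm_num : (0:ℝ) ≤ 2)]
  apply Complex.ext <;> simp <;> nlinarith [ha]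

lemma reRHS (m : ℕ) : ((m.factorial : ℂ) / (1 - Complex.I) ^ (m + 1)).re
    = (m.factorial : ℝ) * (Real.sqrt 2 / 2) ^ (m + 1) * Real.cos (((m : ℝ) + 1) * Real.pi / 4) := by
  have h1 : ((m.factorial : ℂ)) / (1 - Complex.I) ^ (m + 1)
      = ((m.factorial * (Real.sqrt 2 / 2) ^ (m + 1) : ℝ) : ℂ)
        * Complex.exp ((((m : ℝ) + 1) * Real.pi / 4 : ℝ) * Complex.I) := by
    rw [div_eq_mul_inv, ← inv_pow, hinv, mul_pow, ← Complex.exp_nat_mul]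
    push_cast
    ring_nf
  rw [h1, Complex.re_ofReal_mul, Complex.exp_ofReal_mul_I_re]

lemma const_eq (m : ℕ) :
    2 * ((m.factorial : ℝ) * (Real.sqrt 2 / 2) ^ (m + 1))
      = (m.factorial : ℝ) / (2 : ℝ) ^ (((m : ℝ) - 1) / 2) := by
  have hs : Real.sqrt 2 / 2 = (2 : ℝ) ^ (-(1 / 2 : ℝ)) := by
    rw [Real.rpow_neg (by norm_num : (0:ℝ) ≤ 2), ← Real.sqrt_eq_rpow]
    have h2 : Real.sqrt 2 ≠ 0 := by positivity
    rw [div_eq_iff (by norm_num : (2:ℝ) ≠ 0), inv_mul_eq_div, eq_div_iff h2,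
      Real.mul_self_sqrt (by norm_num : (0:ℝ) ≤ 2)]
  rw [hs, ← Real.rpow_natCast ((2:ℝ) ^ (-(1/2:ℝ))) (m+1), ← Real.rpow_mul (by norm_num : (0:ℝ) ≤ 2)]
  rw [div_eq_mul_inv ((m.factorial : ℝ)), ← Real.rpow_neg (by norm_num : (0:ℝ) ≤ 2)]
  rw [mul_comm (2:ℝ), mul_assoc]
  congr 1
  nth_rewrite 3 [show (2:ℝ) = (2:ℝ) ^ (1:ℝ) from (Real.rpow_one 2).symm]
  rw [← Real.rpow_add (by norm_num : (0:ℝ) < 2)]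
  congr 1
  push_cast
  ring


lemma intG (m : ℕ) : Integrable (fun y : ℝ => Real.exp (-|y|) * |y| ^ m) := by
  have int_Ioi : IntegrableOn (fun y : ℝ => Real.exp (-|y|) * |y| ^ m) (Ioi 0) := by
    refine (auxR m).congr_fun (fun t ht => ?_) measurableSet_Ioi
    rw [abs_of_pos ht, mul_comm]
  have int_Iic : IntegrableOn (fun y : ℝ => Real.exp (-|y|) * |y| ^ m) (Iic 0) := by
    rw [← Measure.map_neg_eq_self (volume : Measure ℝ)]
    have me : MeasurableEmbedding fun x : ℝ => -x := (Homeomorph.neg ℝ).measurableEmbedding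
    rw [me.integrableOn_map_iff]
    simp_rw [Function.comp_def, abs_neg, neg_preimage, neg_Iic, neg_zero]
    exact (integrableOn_Ici_iff_integrableOn_Ioi).mpr int_Ioi
  have := int_Iic.union int_Ioi
  rwa [Iic_union_Ioi, integrableOn_univ] at this

lemma intCos (m : ℕ) : Integrable (fun y : ℝ => Real.exp (-|y|) * |y| ^ m * Real.cos y) := by
  refine (intG m).mono' ?_ ?_
  · exact (((Real.continuous_exp.comp _root_.continuous_abs.neg).mul (_root_.continuous_abs.pow m)).mul
      Real.continuous_cos).aestronglyMeasurable
  · refine Filter.Eventually.of_forall (fun y => ?_)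
    rw [norm_mul]
    calc ‖Real.exp (-|y|) * |y| ^ m‖ * ‖Real.cos y‖
        ≤ ‖Real.exp (-|y|) * |y| ^ m‖ * 1 := by
          gcongr; exact Real.abs_cos_le_one y
      _ = Real.exp (-|y|) * |y| ^ m := by
          rw [mul_one, norm_mul, Real.norm_eq_abs, Real.norm_eq_abs, Real.abs_exp,
            _root_.abs_pow, _root_.abs_abs]

lemma intSin (m : ℕ) : Integrable (fun y : ℝ => Real.exp (-|y|) * |y| ^ m * Real.sin y) := by
  refine (intG m).mono' ?_ ?_
  · exact (((Real.continuous_exp.comp _root_.continuous_abs.neg).mul (_root_.continuous_abs.pow m)).mul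
      Real.continuous_sin).aestronglyMeasurable
  · refine Filter.Eventually.of_forall (fun y => ?_)
    rw [norm_mul]
    calc ‖Real.exp (-|y|) * |y| ^ m‖ * ‖Real.sin y‖
        ≤ ‖Real.exp (-|y|) * |y| ^ m‖ * 1 := by
          gcongr; exact Real.abs_sin_le_one y
      _ = Real.exp (-|y|) * |y| ^ m := by
          rw [mul_one, norm_mul, Real.norm_eq_abs, Real.norm_eq_abs, Real.abs_exp,
            _root_.abs_pow, _root_.abs_abs]

lemma sinZero (m : ℕ) : ∫ y : ℝ, Real.exp (-|y|) * |y| ^ m * Real.sin y = 0 := by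
  have h := integral_neg_eq_self (fun y : ℝ => Real.exp (-|y|) * |y| ^ m * Real.sin y) volume
  simp only [abs_neg, Real.sin_neg, mul_neg] at h
  rw [integral_neg] at h
  linarith

lemma cosEval (m : ℕ) : ∫ y : ℝ, Real.exp (-|y|) * |y| ^ m * Real.cos y
    = 2 * ∫ t in Ioi (0:ℝ), t ^ m * Real.exp (-t) * Real.cos t := by
  calc ∫ y : ℝ, Real.exp (-|y|) * |y| ^ m * Real.cos y
      = ∫ y : ℝ, Real.exp (-|y|) * |y| ^ m * Real.cos |y| := by
        refine integral_congr_ae (Filter.Eventually.of_forall (fun y => ?_))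
        simp only []
        rw [Real.cos_abs]
    _ = 2 * ∫ t in Ioi (0:ℝ), Real.exp (-t) * t ^ m * Real.cos t :=
        integral_comp_abs (f := fun t : ℝ => Real.exp (-t) * t ^ m * Real.cos t)
    _ = 2 * ∫ t in Ioi (0:ℝ), t ^ m * Real.exp (-t) * Real.cos t := by
        congr 1
        exact setIntegral_congr_fun measurableSet_Ioi (fun t _ => by ring)


lemma hG (m : ℕ) : ∫ y : ℝ, Real.exp (-|y|) * |y| ^ m * Real.cos y
    = ((Nat.factorial m : ℝ) / (2 : ℝ) ^ (((m : ℝ) - 1) / 2)) *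
        Real.cos (((m : ℝ) + 1) * Real.pi / 4) := by
  rw [cosEval, cosIoi, reRHS, ← const_eq m]
  ring

theorem stmt_15 (m : ℕ) (x : ℝ) :
    (∫ y : ℝ, Real.exp (-|y|) * |y| ^ m * Real.sin (x - y) =
        ((Nat.factorial m : ℝ) / (2 : ℝ) ^ (((m : ℝ) - 1) / 2)) *
          Real.cos (((m : ℝ) + 1) * Real.pi / 4) * Real.sin x) ∧
      ∫ y : ℝ, Real.exp (-|y|) * |y| ^ m * Real.cos (x - y) =
        ((Nat.factorial m : ℝ) / (2 : ℝ) ^ (((m : ℝ) - 1) / 2)) *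
          Real.cos (((m : ℝ) + 1) * Real.pi / 4) * Real.cos x := by
  constructor
  · calc ∫ y : ℝ, Real.exp (-|y|) * |y| ^ m * Real.sin (x - y)
        = ∫ y : ℝ, (Real.sin x * (Real.exp (-|y|) * |y| ^ m * Real.cos y)
            - Real.cos x * (Real.exp (-|y|) * |y| ^ m * Real.sin y)) := by
          refine integral_congr_ae (Filter.Eventually.of_forall (fun y => ?_))
          simp only []
          rw [Real.sin_sub]
          ring
      _ = Real.sin x * (∫ y : ℝ, Real.exp (-|y|) * |y| ^ m * Real.cos y)
            - Real.cos x * ∫ y : ℝ, Real.exp (-|y|) * |y| ^ m * Real.sin y := by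
          rw [integral_sub ((intCos m).const_mul _) ((intSin m).const_mul _),
            integral_const_mul, integral_const_mul]
      _ = _ := by rw [hG, sinZero]; ring
  · calc ∫ y : ℝ, Real.exp (-|y|) * |y| ^ m * Real.cos (x - y)
        = ∫ y : ℝ, (Real.cos x * (Real.exp (-|y|) * |y| ^ m * Real.cos y)
            + Real.sin x * (Real.exp (-|y|) * |y| ^ m * Real.sin y)) := by
          refine integral_congr_ae (Filter.Eventually.of_forall (fun y => ?_))
          simp only []
          rw [Real.cos_sub]
          ring
      _ = Real.cos x * (∫ y : ℝ, Real.exp (-|y|) * |y| ^ m * Real.cos y)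
            + Real.sin x * ∫ y : ℝ, Real.exp (-|y|) * |y| ^ m * Real.sin y := by
          rw [integral_add ((intCos m).const_mul _) ((intSin m).const_mul _),
            integral_const_mul, integral_const_mul]
      _ = _ := by rw [hG, sinZero]; ring
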